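/- Let U ⊆ ℝ² be open, let α⁰, α¹ : U → ℝ be continuously differentiable with ∂α⁰/∂y (p) ≠ 0 or ∂α⁰/∂z (p) ≠ 0 at a point p ∈ U, and suppose that (∂α⁰/∂y)(∂α¹/∂z) − (∂α⁰/∂z)(∂α¹/∂y) = 0 everywhere on U. Then there exist an open neighborhood V ⊆ U of p and a continuously differentiable function h : ℝ → ℝ such that α¹ = h ∘ α⁰ on V. -/

import Mathlib

noncomputable section
open Topology

/-- Partial derivative with respect to the first coordinate `y` of `ℝ × ℝ`. -/
def pdy2 (f : ℝ × ℝ → ℝ) (p : ℝ × ℝ) : ℝ := fderiv ℝ f p (1, 0)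

/-- Partial derivative with respect to the second coordinate `z` of `ℝ × ℝ`. -/
def pdz2 (f : ℝ × ℝ → ℝ) (p : ℝ × ℝ) : ℝ := fderiv ℝ f p (0, 1)

private lemma clm_decomp (L : ℝ × ℝ →L[ℝ] ℝ) (w : ℝ × ℝ) :
    L w = w.1 * L (1, 0) + w.2 * L (0, 1) := by
  have hw : w = w.1 • ((1 : ℝ), (0 : ℝ)) + w.2 • ((0 : ℝ), (1 : ℝ)) := by
    ext <;> simp
  conv_lhs => rw [hw]
  rw [map_add, map_smul, map_smul, smul_eq_mul, smul_eq_mul]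

private lemma key (U : Set (ℝ × ℝ)) (hU : IsOpen U)
    (α0 α1 : ℝ × ℝ → ℝ)
    (hα0 : ContDiffOn ℝ 1 α0 U) (hα1 : ContDiffOn ℝ 1 α1 U)
    (p : ℝ × ℝ) (hp : p ∈ U)
    (hnz : pdz2 α0 p ≠ 0)
    (hjac : ∀ q ∈ U, pdy2 α0 q * pdz2 α1 q - pdz2 α0 q * pdy2 α1 q = 0) :
    ∃ V : Set (ℝ × ℝ), IsOpen V ∧ V ⊆ U ∧ p ∈ V ∧
      ∃ h : ℝ → ℝ, ContDiff ℝ 1 h ∧ ∀ q ∈ V, α1 q = h (α0 q) := by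
  classical
  -- continuity of the partial derivative
  have hcfd : ContinuousOn (fderiv ℝ α0) U := hα0.continuousOn_fderiv_of_isOpen hU le_rfl
  have hcpdz : ContinuousOn (pdz2 α0) U := hcfd.clm_apply continuousOn_const
  set W : Set (ℝ × ℝ) := U ∩ (pdz2 α0) ⁻¹' {(0 : ℝ)}ᶜ with hWdef
  have hWopen : IsOpen W := hcpdz.isOpen_inter_preimage hU isOpen_compl_singleton
  have hWU : W ⊆ U := Set.inter_subset_left
  have hpW : p ∈ W := ⟨hp, hnz⟩
  have hWnz : ∀ q ∈ W, pdz2 α0 q ≠ 0 := fun q hq => hq.2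
  have hdα0 : ∀ q ∈ U, DifferentiableAt ℝ α0 q := fun q hq =>
    (hα0.contDiffAt (hU.mem_nhds hq)).differentiableAt one_ne_zero
  have hdα1 : ∀ q ∈ U, DifferentiableAt ℝ α1 q := fun q hq =>
    (hα1.contDiffAt (hU.mem_nhds hq)).differentiableAt one_ne_zero
  -- the straightening map Φ
  set Φ : ℝ × ℝ → ℝ × ℝ := fun q => (q.1, α0 q) with hΦdef
  have hΦd : ∀ q ∈ U,
      HasFDerivAt Φ ((ContinuousLinearMap.fst ℝ ℝ ℝ).prod (fderiv ℝ α0 q)) q :=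
    fun q hq => (hasFDerivAt_fst).prodMk (hdα0 q hq).hasFDerivAt
  set L : (ℝ × ℝ) →L[ℝ] (ℝ × ℝ) :=
    (ContinuousLinearMap.fst ℝ ℝ ℝ).prod (fderiv ℝ α0 p) with hLdef
  have hLapp : ∀ w : ℝ × ℝ, L w = (w.1, fderiv ℝ α0 p w) := fun w => rfl
  have hLinj : Function.Injective L := by
    have h0 : ∀ w : ℝ × ℝ, L w = 0 → w = 0 := by
      intro w hw
      have h1 : w.1 = 0 := congrArg Prod.fst hw
      have h2 : fderiv ℝ α0 p w = 0 := congrArg Prod.snd hw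
      rw [clm_decomp, h1] at h2
      have h2' : w.2 * pdz2 α0 p = 0 := by simpa [pdz2] using h2
      have h3 : w.2 = 0 := by
        rcases mul_eq_zero.mp h2' with h | h
        · exact h
        · exact absurd h hnz
      exact Prod.ext h1 h3
    intro a b hab
    have := h0 (a - b) (by rw [map_sub, hab, sub_self])
    exact sub_eq_zero.mp this
  have hLsurj : Function.Surjective L :=
    (LinearMap.injective_iff_surjective (f := (L : (ℝ × ℝ) →ₗ[ℝ] (ℝ × ℝ)))).mp hLinj
  set e : (ℝ × ℝ) ≃L[ℝ] (ℝ × ℝ) :=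
    ContinuousLinearEquiv.ofBijective L (LinearMap.ker_eq_bot.mpr hLinj)
      (LinearMap.range_eq_top.mpr hLsurj) with hedef
  have hecoe : (e : (ℝ × ℝ) →L[ℝ] (ℝ × ℝ)) = L := rfl
  have hΦc : ContDiffAt ℝ 1 Φ p :=
    (contDiffAt_fst).prodMk (hα0.contDiffAt (hU.mem_nhds hp))
  have hf' : HasFDerivAt Φ (e : (ℝ × ℝ) →L[ℝ] (ℝ × ℝ)) p := by
    rw [hecoe]; exact hΦd p hp
  set Ψ : ℝ × ℝ → ℝ × ℝ := hΦc.localInverse hf' one_ne_zero with hΨdef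
  have hΨc : ContDiffAt ℝ 1 Ψ (Φ p) := hΦc.to_localInverse hf' one_ne_zero
  have hΨp : Ψ (Φ p) = p := hΦc.localInverse_apply_image hf' one_ne_zero
  have hleft : ∀ᶠ q in 𝓝 p, Ψ (Φ q) = q :=
    (hΦc.hasStrictFDerivAt' hf' one_ne_zero).eventually_left_inverse
  have hright : ∀ᶠ x in 𝓝 (Φ p), Φ (Ψ x) = x :=
    (hΦc.hasStrictFDerivAt' hf' one_ne_zero).eventually_right_inverse
  -- an open set where Ψ is C¹
  obtain ⟨O0, hO0nhds, hΨO0⟩ := hΨc.contDiffOn le_rfl (by simp)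
  set O : Set (ℝ × ℝ) := interior O0 with hOdef
  have hOopen : IsOpen O := isOpen_interior
  have hOnhds : O ∈ 𝓝 (Φ p) := interior_mem_nhds.mpr hO0nhds
  have hΨO : ContDiffOn ℝ 1 Ψ O := hΨO0.mono interior_subset
  set x0 : ℝ × ℝ := Φ p with hx0def
  -- choose a ball
  have hS : O ∩ Ψ ⁻¹' W ∩ {x | Φ (Ψ x) = x} ∈ 𝓝 x0 := by
    refine Filter.inter_mem (Filter.inter_mem hOnhds ?_) hright
    exact hΨc.continuousAt.preimage_mem_nhds (by rw [hΨp]; exact hWopen.mem_nhds hpW)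
  obtain ⟨r, hr0, hball⟩ := Metric.mem_nhds_iff.mp hS
  set B : Set (ℝ × ℝ) := Metric.ball x0 r with hBdef
  have hBsub : ∀ x ∈ B, Ψ x ∈ W ∧ Φ (Ψ x) = x ∧ x ∈ O := fun x hx =>
    ⟨(hball hx).1.2, (hball hx).2, (hball hx).1.1⟩
  have hBO : B ⊆ O := fun x hx => (hBsub x hx).2.2
  -- the reduced function g and its vanishing y-derivative
  set g : ℝ × ℝ → ℝ := fun x => α1 (Ψ x) with hgdef
  have hderiv0 : ∀ x ∈ B, ∃ gx' : (ℝ × ℝ) →L[ℝ] ℝ,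
      HasFDerivAt g gx' x ∧ gx' (1, 0) = 0 := by
    intro x hx
    obtain ⟨hxW, hxΦΨ, hxO⟩ := hBsub x hx
    have hqU : Ψ x ∈ U := hWU hxW
    have hΨx : HasFDerivAt Ψ (fderiv ℝ Ψ x) x :=
      (((hΨO.contDiffAt (hOopen.mem_nhds hxO)).differentiableAt one_ne_zero)).hasFDerivAt
    set D : (ℝ × ℝ) →L[ℝ] (ℝ × ℝ) := fderiv ℝ Ψ x with hDdef
    have hcomp : HasFDerivAt (Φ ∘ Ψ)
        (((ContinuousLinearMap.fst ℝ ℝ ℝ).prod (fderiv ℝ α0 (Ψ x))).comp D) x :=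
      (hΦd (Ψ x) hqU).comp x hΨx
    have hEq : (Φ ∘ Ψ) =ᶠ[𝓝 x] id := by
      filter_upwards [Metric.isOpen_ball.mem_nhds hx] with y hy
      exact (hBsub y hy).2.1
    have hid : HasFDerivAt (Φ ∘ Ψ) (ContinuousLinearMap.id ℝ (ℝ × ℝ)) x :=
      (hEq.symm.hasFDerivAt_iff).mp (hasFDerivAt_id x)
    have huniq : ((ContinuousLinearMap.fst ℝ ℝ ℝ).prod (fderiv ℝ α0 (Ψ x))).comp D =
        ContinuousLinearMap.id ℝ (ℝ × ℝ) := hcomp.unique hid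
    set w : ℝ × ℝ := D (1, 0) with hwdef
    have hw : (w.1, fderiv ℝ α0 (Ψ x) w) = ((1 : ℝ), (0 : ℝ)) := by
      have := congrArg (fun T : (ℝ × ℝ) →L[ℝ] (ℝ × ℝ) => T (1, 0)) huniq
      simpa using this
    have hw1 : w.1 = 1 := congrArg Prod.fst hw
    have hw2 : fderiv ℝ α0 (Ψ x) w = 0 := congrArg Prod.snd hw
    refine ⟨(fderiv ℝ α1 (Ψ x)).comp D, (hdα1 (Ψ x) hqU).hasFDerivAt.comp x hΨx, ?_⟩
    have e1 : ((fderiv ℝ α1 (Ψ x)).comp D) (1, 0) =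
        w.1 * pdy2 α1 (Ψ x) + w.2 * pdz2 α1 (Ψ x) := by
      have h := clm_decomp (fderiv ℝ α1 (Ψ x)) w
      simp only [pdy2, pdz2]
      exact h
    have e0 : w.1 * pdy2 α0 (Ψ x) + w.2 * pdz2 α0 (Ψ x) = 0 := by
      have h := clm_decomp (fderiv ℝ α0 (Ψ x)) w
      simp only [pdy2, pdz2]
      rw [← h]; exact hw2
    have hz := hWnz (Ψ x) hxW
    have hj := hjac (Ψ x) hqU
    rw [e1, hw1]
    rw [hw1] at e0
    have hkey : pdz2 α0 (Ψ x) * (1 * pdy2 α1 (Ψ x) + w.2 * pdz2 α1 (Ψ x)) = 0 := by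
      linear_combination pdz2 α1 (Ψ x) * e0 - hj
    exact (mul_eq_zero.mp hkey).resolve_left hz
  -- g is C¹ on B
  have hΨmapsU : Set.MapsTo Ψ B U := fun x hx => hWU (hBsub x hx).1
  have hgB : ContDiffOn ℝ 1 g B := hα1.comp (hΨO.mono hBO) hΨmapsU
  -- constancy in the y direction
  have hconst : ∀ x ∈ B, g x = g (x0.1, x.2) := by
    intro x hx
    have hx2 : dist x.2 x0.2 < r := by
      refine lt_of_le_of_lt ?_ (Metric.mem_ball.mp hx)
      rw [Prod.dist_eq]; exact le_max_right _ _
    have hmem : ∀ t ∈ Metric.ball x0.1 r, (t, x.2) ∈ B := by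
      intro t ht
      rw [hBdef, Metric.mem_ball, Prod.dist_eq]
      exact max_lt (Metric.mem_ball.mp ht) hx2
    have hu : ∀ t ∈ Metric.ball x0.1 r, HasDerivAt (fun s => g (s, x.2)) 0 t := by
      intro t ht
      obtain ⟨g', hg', hg'0⟩ := hderiv0 (t, x.2) (hmem t ht)
      have h1 : HasDerivAt (fun s : ℝ => (s, x.2)) ((1 : ℝ), (0 : ℝ)) t :=
        (hasDerivAt_id t).prodMk (hasDerivAt_const t x.2)
      have := hg'.comp_hasDerivAt t h1
      rwa [hg'0] at this
    have hx1 : x.1 ∈ Metric.ball x0.1 r := by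
      refine Metric.mem_ball.mpr (lt_of_le_of_lt ?_ (Metric.mem_ball.mp hx))
      rw [Prod.dist_eq]; exact le_max_left _ _
    have hx01 : x0.1 ∈ Metric.ball x0.1 r := Metric.mem_ball_self hr0
    have := (convex_ball x0.1 r).is_const_of_fderivWithin_eq_zero
      (f := fun s => g (s, x.2))
      (fun t ht => ((hu t ht).differentiableAt).differentiableWithinAt)
      (fun t ht => by
        rw [fderivWithin_of_isOpen Metric.isOpen_ball ht]
        have := (hu t ht).hasFDerivAt.fderiv
        rw [this]; ext1; simp)
      hx1 hx01
    simpa using this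
  -- the one-variable function h0
  set c : ℝ := x0.2 with hcdef
  have hI : ∀ z ∈ Metric.ball c r, ((x0.1 : ℝ), z) ∈ B := by
    intro z hz
    rw [hBdef, Metric.mem_ball, Prod.dist_eq]
    exact max_lt (by simpa using hr0) (Metric.mem_ball.mp hz)
  set h0 : ℝ → ℝ := fun z => g (x0.1, z) with hh0def
  have hh0 : ContDiffOn ℝ 1 h0 (Metric.ball c r) :=
    hgB.comp ((contDiff_const.prodMk contDiff_id).contDiffOn) (fun z hz => hI z hz)
  -- bump function and squashing map
  set ψ : ContDiffBump c := ⟨r / 2, 3 * r / 4, by linarith, by linarith⟩ with hψdef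
  set σ : ℝ → ℝ := fun z => c + ψ z * (z - c) with hσdef
  have hσc : ContDiff ℝ 1 σ :=
    contDiff_const.add ((ψ.contDiff (n := 1)).mul (contDiff_id.sub contDiff_const))
  have hσmem : ∀ z, σ z ∈ Metric.ball c r := by
    intro z
    rw [Metric.mem_ball, Real.dist_eq, hσdef]
    simp only [add_sub_cancel_left]
    rcases le_or_gt (3 * r / 4) (dist z c) with hzc | hzc
    · rw [ψ.zero_of_le_dist hzc]; simpa using hr0
    · have h1 : |ψ z * (z - c)| ≤ |z - c| := by
        rw [abs_mul, abs_of_nonneg ψ.nonneg]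
        exact mul_le_of_le_one_left (abs_nonneg _) ψ.le_one
      have h2 : |z - c| < r := by
        rw [← Real.dist_eq]; linarith
      linarith
  have hσid : ∀ z ∈ Metric.ball c (r / 2), σ z = z := by
    intro z hz
    have : ψ z = 1 := ψ.one_of_mem_closedBall (Metric.ball_subset_closedBall hz)
    simp [hσdef, this]
  set h : ℝ → ℝ := fun z => h0 (σ z) with hhdef
  have hhc : ContDiff ℝ 1 h := by
    rw [← contDiffOn_univ]
    exact hh0.comp (hσc.contDiffOn) (fun z _ => hσmem z)
  -- the neighborhood V
  obtain ⟨T, hTsub, hTopen, hpT⟩ := eventually_nhds_iff.mp hleft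
  have hΦcont : ContinuousOn Φ U := continuousOn_fst.prodMk hα0.continuousOn
  set V : Set (ℝ × ℝ) := T ∩ (U ∩ Φ ⁻¹' Metric.ball x0 (r / 2)) with hVdef
  have hVopen : IsOpen V :=
    hTopen.inter (hΦcont.isOpen_inter_preimage hU Metric.isOpen_ball)
  have hpV : p ∈ V := ⟨hpT, hp, by simp [Metric.mem_ball, hx0def]; linarith⟩
  refine ⟨V, hVopen, fun q hq => hq.2.1, hpV, h, hhc, ?_⟩
  intro q hq
  have hqinv : Ψ (Φ q) = q := hTsub q hq.1
  have hqhalf : Φ q ∈ Metric.ball x0 (r / 2) := hq.2.2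
  have hqB : Φ q ∈ B := Metric.ball_subset_ball (by linarith) hqhalf
  have h1 : α1 q = g (Φ q) := by rw [hgdef]; simp only []; rw [hqinv]
  have hzb : α0 q ∈ Metric.ball c (r / 2) := by
    rw [Metric.mem_ball]
    refine lt_of_le_of_lt ?_ (Metric.mem_ball.mp hqhalf)
    have : dist (Φ q).2 x0.2 ≤ dist (Φ q) x0 := by
      rw [Prod.dist_eq]; exact le_max_right _ _
    exact this
  rw [h1, hconst (Φ q) hqB]
  have h2 : h (α0 q) = h0 (α0 q) := by rw [hhdef]; simp only []; rw [hσid (α0 q) hzb]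
  rw [h2]

theorem statement13 (U : Set (ℝ × ℝ)) (hU : IsOpen U)
    (α0 α1 : ℝ × ℝ → ℝ)
    (hα0 : ContDiffOn ℝ 1 α0 U) (hα1 : ContDiffOn ℝ 1 α1 U)
    (p : ℝ × ℝ) (hp : p ∈ U)
    (hnz : pdy2 α0 p ≠ 0 ∨ pdz2 α0 p ≠ 0)
    (hjac : ∀ q ∈ U, pdy2 α0 q * pdz2 α1 q - pdz2 α0 q * pdy2 α1 q = 0) :
    ∃ V : Set (ℝ × ℝ), IsOpen V ∧ V ⊆ U ∧ p ∈ V ∧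
      ∃ h : ℝ → ℝ, ContDiff ℝ 1 h ∧ ∀ q ∈ V, α1 q = h (α0 q) := by
  rcases hnz with hy | hz
  · -- swap coordinates and apply `key`
    set S : (ℝ × ℝ) ≃L[ℝ] (ℝ × ℝ) := ContinuousLinearEquiv.prodComm ℝ ℝ ℝ with hSdef
    have hSapp : ∀ q : ℝ × ℝ, S q = (q.2, q.1) := fun q => rfl
    have hSS : ∀ q : ℝ × ℝ, S (S q) = q := fun q => rfl
    set U' : Set (ℝ × ℝ) := S ⁻¹' U with hU'def
    have hU'open : IsOpen U' := hU.preimage S.continuous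
    set β0 : ℝ × ℝ → ℝ := α0 ∘ S with hβ0def
    set β1 : ℝ × ℝ → ℝ := α1 ∘ S with hβ1def
    have hβ0 : ContDiffOn ℝ 1 β0 U' :=
      hα0.comp (S.contDiff.contDiffOn) (Set.mapsTo_preimage _ _)
    have hβ1 : ContDiffOn ℝ 1 β1 U' :=
      hα1.comp (S.contDiff.contDiffOn) (Set.mapsTo_preimage _ _)
    have hswap : ∀ f : ℝ × ℝ → ℝ, ∀ q : ℝ × ℝ, DifferentiableAt ℝ f (S q) →
        pdy2 (f ∘ S) q = pdz2 f (S q) ∧ pdz2 (f ∘ S) q = pdy2 f (S q) := by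
      intro f q hdf
      have hfd : fderiv ℝ (f ∘ S) q =
          (fderiv ℝ f (S q)).comp (S : (ℝ × ℝ) →L[ℝ] (ℝ × ℝ)) := by
        rw [fderiv_comp q hdf (S.differentiableAt)]
        congr 1
        exact S.fderiv
      constructor
      · rw [pdy2, hfd]; rfl
      · rw [pdz2, hfd]; rfl
    have hdα0 : ∀ q ∈ U, DifferentiableAt ℝ α0 q := fun q hq =>
      (hα0.contDiffAt (hU.mem_nhds hq)).differentiableAt one_ne_zero
    have hdα1 : ∀ q ∈ U, DifferentiableAt ℝ α1 q := fun q hq =>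
      (hα1.contDiffAt (hU.mem_nhds hq)).differentiableAt one_ne_zero
    set p' : ℝ × ℝ := S p with hp'def
    have hp'U : p' ∈ U' := by
      rw [hU'def]; simpa [hSS, hp'def] using hp
    have hSp' : S p' = p := hSS p
    have hnz' : pdz2 β0 p' ≠ 0 := by
      have := (hswap α0 p' (by rw [hSp']; exact hdα0 p hp)).2
      rw [hβ0def, this, hSp']; exact hy
    have hjac' : ∀ q ∈ U', pdy2 β0 q * pdz2 β1 q - pdz2 β0 q * pdy2 β1 q = 0 := by
      intro q hq
      have hqU : S q ∈ U := hq
      have h0 := hswap α0 q (hdα0 _ hqU)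
      have h1 := hswap α1 q (hdα1 _ hqU)
      rw [hβ0def, hβ1def, h0.1, h0.2, h1.1, h1.2]
      have := hjac (S q) hqU
      linarith
    obtain ⟨V', hV'open, hV'U, hp'V', hfun, hfunC, hfunEq⟩ :=
      key U' hU'open β0 β1 hβ0 hβ1 p' hp'U hnz' hjac'
    refine ⟨S ⁻¹' V', hV'open.preimage S.continuous, ?_, ?_, hfun, hfunC, ?_⟩
    · intro q hq
      have : S q ∈ U' := hV'U hq
      simpa [hSS, hU'def] using this
    · show S p ∈ V'
      exact hp'V'
    · intro q hq
      have := hfunEq (S q) hq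
      simpa [hβ0def, hβ1def, hSS] using this
  · exact key U hU α0 α1 hα0 hα1 p hp hz hjac
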